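/- In any JSBAF satisfying the structural restrictions, the strict-including-minimal labeling SIM is an admissible labeling: every argument labeled IN by SIM is legally IN with respect to SIM, an argument is labeled OUT by SIM if and only if it is legally OUT with respect to SIM, and all strict arguments are labeled IN. -/
import Mathlib


namespace JS

inductive Lab : Type
  | IN | OUT | UNDEC
deriving DecidableEq

structure JSBAF (A : Type) where
  att : A → A → Prop
  supp : Set A → A → Prop
  pref : A → A → Prop

variable {A : Type}

/-- Strict arguments: supported by the empty set or only by strict arguments. -/
inductive Strict (J : JSBAF A) : A → Prop
  | mk (S : Set A) (a : A) (h : J.supp S a) (hS : ∀ b ∈ S, Strict J b) : Strict J a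

/-- Structural restrictions on JSBAFs. -/
structure Restr (J : JSBAF A) : Prop where
  finSupp : ∀ S b, J.supp S b → S.Finite
  uniqSupp : ∀ S S' b, J.supp S b → J.supp S' b → S = S'
  acyc : ∀ a, ¬ Relation.TransGen (fun x y => ∃ S, J.supp S y ∧ x ∈ S) a a
  strictUnatt : ∀ a b, Strict J b → ¬ J.att a b
  prefRefl : ∀ a, J.pref a a
  prefTrans : ∀ a b c, J.pref a b → J.pref b c → J.pref a c
  prefTotal : ∀ a b, J.pref a b ∨ J.pref b a
  strictEq : ∀ a b, Strict J a → Strict J b → J.pref a b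
  strictTop : ∀ a b, ¬ Strict J a → Strict J b → J.pref a b ∧ ¬ J.pref b a

def inL (L : A → Lab) : Set A := {a | L a = Lab.IN}
def outL (L : A → Lab) : Set A := {a | L a = Lab.OUT}
def undecL (L : A → Lab) : Set A := {a | L a = Lab.UNDEC}

/-- Definition 2, item 1: legally IN. -/
def legallyIn (J : JSBAF A) (L : A → Lab) (a : A) : Prop :=
  (∀ b, J.att b a → L b = Lab.OUT) ∧
  ∀ S c, J.supp S c → a ∈ S → (∀ b ∈ S, b ≠ a → J.pref a b) →
    (L c = Lab.IN ∨
     (L c = Lab.UNDEC ∧ ∃ b ∈ S, b ≠ a ∧ (L b = Lab.OUT ∨ L b = Lab.UNDEC)) ∨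
     (L c = Lab.OUT ∧
       ((∃ b ∈ S, b ≠ a ∧ L b = Lab.OUT) ∨
        (∃ b₁ ∈ S, ∃ b₂ ∈ S, b₁ ≠ a ∧ b₂ ≠ a ∧ b₁ ≠ b₂ ∧
          L b₁ = Lab.UNDEC ∧ L b₂ = Lab.UNDEC))))

/-- Definition 2, item 2: legally OUT. -/
def legallyOut (J : JSBAF A) (L : A → Lab) (a : A) : Prop :=
  (∃ b, J.att b a ∧ L b = Lab.IN) ∨
  (∃ (n : ℕ) (S : ℕ → Set A) (b : ℕ → A),
    (∀ i ≤ n, J.supp (S i) (b i)) ∧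
    (∀ i < n, b i ∈ S (i + 1)) ∧
    a ∈ S 0 ∧
    (∀ d ∈ S 0, d ≠ a → L d = Lab.IN) ∧
    (∃ c, J.att c (b n) ∧ L c = Lab.IN) ∧
    (∀ i ≤ n, L (b i) = Lab.OUT) ∧
    (∀ i, 1 ≤ i → i ≤ n → ∀ d ∈ S i, d ≠ b (i - 1) → L d = Lab.IN) ∧
    (∀ d ∈ S 0, d ≠ a → J.pref a d))

/-- Admissible labelings. -/
def Admissible (J : JSBAF A) (L : A → Lab) : Prop :=
  (∀ a, L a = Lab.IN → legallyIn J L a) ∧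
  (∀ a, L a = Lab.OUT ↔ legallyOut J L a) ∧
  (∀ a, Strict J a → L a = Lab.IN)

/-- Preferred labelings: maximal admissible w.r.t. inclusion of IN-sets. -/
def Preferred (J : JSBAF A) (L : A → Lab) : Prop :=
  Admissible J L ∧ ∀ L', Admissible J L' → ¬ (inL L ⊂ inL L')

/-- The iterated OUT-sets of the SIM labeling. -/
def simO (J : JSBAF A) : ℕ → Set A
  | 0 => {a | ∃ b, Strict J b ∧ J.att b a}
  | n + 1 => simO J n ∪
      {a | ∃ S c, J.supp S c ∧ a ∈ S ∧ c ∈ simO J n ∧ ∀ d ∈ S, d ≠ a → Strict J d}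

def simIn (J : JSBAF A) : Set A := {a | Strict J a}
def simOut (J : JSBAF A) : Set A := ⋃ n, simO J n

open Classical in
/-- The strict-including-minimal labeling. -/
noncomputable def SIM (J : JSBAF A) : A → Lab := fun a =>
  if Strict J a then Lab.IN else if a ∈ simOut J then Lab.OUT else Lab.UNDEC

/-- The order on labelings. -/
def leL (L₁ L₂ : A → Lab) : Prop := inL L₁ ⊆ inL L₂ ∧ outL L₁ ⊆ outL L₂

end JS

namespace JS

variable {A : Type}

lemma sim_eq_in {J : JSBAF A} {a : A} : SIM J a = Lab.IN ↔ Strict J a := by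
  unfold SIM
  split_ifs with h1 h2 <;> simp [h1]

lemma sim_eq_out {J : JSBAF A} {a : A} :
    SIM J a = Lab.OUT ↔ ¬ Strict J a ∧ a ∈ simOut J := by
  unfold SIM
  split_ifs with h1 h2
  · simp [h1]
  · simp [h1, h2]
  · simp [h1, h2]

lemma strict_not_simO {J : JSBAF A} (hR : Restr J) :
    ∀ n, ∀ a, Strict J a → a ∉ simO J n := by
  intro n
  induction n with
  | zero =>
    rintro a ha ⟨b, hb, hatt⟩
    exact hR.strictUnatt b a ha hatt
  | succ n ih =>
    intro a ha h
    simp only [simO, Set.mem_union, Set.mem_setOf_eq] at h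
    rcases h with h | ⟨S, c, hsupp, haS, hc, hstr⟩
    · exact ih a ha h
    · exact ih c (Strict.mk S c hsupp (fun d hd => by
        by_cases hda : d = a
        · subst hda; exact ha
        · exact hstr d hd hda)) hc

lemma strict_legallyIn {J : JSBAF A} (hR : Restr J) {a : A} (ha : Strict J a) :
    legallyIn J (SIM J) a := by
  constructor
  · intro b hb
    exact absurd hb (hR.strictUnatt b a ha)
  · intro S c hsupp haS hpref
    left
    rw [sim_eq_in]
    exact Strict.mk S c hsupp (fun b hb => by
      by_cases hba : b = a
      · subst hba; exact ha
      · by_contra hnb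
        exact (hR.strictTop b a hnb ha).2 (hpref b hb hba))

lemma out_legallyOut {J : JSBAF A} (hR : Restr J) :
    ∀ n a, a ∈ simO J n → legallyOut J (SIM J) a := by
  intro n
  induction n with
  | zero =>
    rintro a ⟨b, hb, hatt⟩
    exact Or.inl ⟨b, hatt, sim_eq_in.mpr hb⟩
  | succ n ih =>
    intro a hmem0
    have hmemcopy := hmem0
    simp only [simO, Set.mem_union, Set.mem_setOf_eq] at hmem0
    rcases hmem0 with h | ⟨S, c, hsupp, haS, hc, hstr⟩
    · exact ih a h
    · have hcout : SIM J c = Lab.OUT :=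
        sim_eq_out.mpr ⟨fun h => strict_not_simO hR n c h hc,
          Set.mem_iUnion.mpr ⟨n, hc⟩⟩
      have hna : ¬ Strict J a := fun h => strict_not_simO hR (n+1) a h hmemcopy
      have hdIN : ∀ d ∈ S, d ≠ a → SIM J d = Lab.IN :=
        fun d hd hda => sim_eq_in.mpr (hstr d hd hda)
      have hpref : ∀ d ∈ S, d ≠ a → J.pref a d :=
        fun d hd hda => (hR.strictTop a d hna (hstr d hd hda)).1
      rcases ih c hc with ⟨b, hatt, hbIN⟩ |
        ⟨m, S', b', hsupp', hmem', hcS', hIN', hattc', hOUT', hmid', _⟩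
      · refine Or.inr ⟨0, fun _ => S, fun _ => c, ?_, ?_, haS, hdIN,
          ⟨b, hatt, hbIN⟩, ?_, ?_, hpref⟩
        · intro i _; exact hsupp
        · intro i hi; omega
        · intro i _; exact hcout
        · intro i hi1 hi2; omega
      · refine Or.inr ⟨m+1, fun i => Nat.casesOn i S S', fun i => Nat.casesOn i c b',
          ?_, ?_, haS, hdIN, ?_, ?_, ?_, hpref⟩
        · intro i hi
          cases i with
          | zero => exact hsupp
          | succ j => exact hsupp' j (by omega)
        · intro i hi
          cases i with
          | zero => exact hcS'
          | succ j => exact hmem' j (by omega)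
        · exact hattc'
        · intro i hi
          cases i with
          | zero => exact hcout
          | succ j => exact hOUT' j (by omega)
        · intro i hi1 hi2
          obtain ⟨j, rfl⟩ : ∃ j, i = j + 1 := ⟨i - 1, by omega⟩
          intro d hd hdb
          cases j with
          | zero => exact hIN' d hd hdb
          | succ k => exact hmid' (k+1) (by omega) (by omega) d hd hdb

lemma legallyOut_out {J : JSBAF A} (hR : Restr J) {a : A}
    (h : legallyOut J (SIM J) a) : SIM J a = Lab.OUT := by
  rcases h with ⟨b, hatt, hb⟩ |
    ⟨n, S, b, hsupp, hmem, haS, hIN, ⟨c, hattc, hcIN⟩, hOUT, hmid, hpref⟩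
  · have hb' := sim_eq_in.mp hb
    have hna : ¬ Strict J a := fun h => hR.strictUnatt b a h hatt
    exact sim_eq_out.mpr ⟨hna, Set.mem_iUnion.mpr ⟨0, ⟨b, hb', hatt⟩⟩⟩
  · have h0 : SIM J (b 0) = Lab.OUT := hOUT 0 (Nat.zero_le n)
    obtain ⟨hnb0, hb0⟩ := sim_eq_out.mp h0
    obtain ⟨m, hm⟩ := Set.mem_iUnion.mp hb0
    have hstr : ∀ d ∈ S 0, d ≠ a → Strict J d :=
      fun d hd hda => sim_eq_in.mp (hIN d hd hda)
    have hna : ¬ Strict J a := fun hSa =>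
      hnb0 (Strict.mk (S 0) (b 0) (hsupp 0 (Nat.zero_le n)) (fun d hd => by
        by_cases hda : d = a
        · subst hda; exact hSa
        · exact hstr d hd hda))
    refine sim_eq_out.mpr ⟨hna, Set.mem_iUnion.mpr ⟨m + 1, ?_⟩⟩
    simp only [simO, Set.mem_union, Set.mem_setOf_eq]
    exact Or.inr ⟨S 0, b 0, hsupp 0 (Nat.zero_le n), haS, hm, hstr⟩

end JS

open JS in
/-- In any JSBAF satisfying the structural restrictions, the SIM labeling is
admissible. -/
theorem sim_admissible {A : Type} (J : JSBAF A) (hR : Restr J) :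
    Admissible J (SIM J) := by
  refine ⟨?_, ?_, ?_⟩
  · intro a ha
    exact strict_legallyIn hR (sim_eq_in.mp ha)
  · intro a
    constructor
    · intro ha
      obtain ⟨hna, hmem⟩ := sim_eq_out.mp ha
      obtain ⟨n, hn⟩ := Set.mem_iUnion.mp hmem
      exact out_legallyOut hR n a hn
    · exact legallyOut_out hR
  · intro a ha
    exact sim_eq_in.mpr ha
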